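/- Let L be a countable relational first-order language and let M be an ultrahomogeneous L-structure whose age contains only countably many structures up to isomorphism. Then M has the externally definable Ramsey property if and only if M has the fixed points on type spaces property (FPT). (Theorem 5.1(2).) -/

import Mathlib

open FirstOrder FirstOrder.Language CategoryTheory

universe u v w

namespace EDRP

/-- The colouring `χ` of the copies of `A` in `M` (copies identified with embeddings
`A ↪[L] M`) is externally definable by the formulas `φ i`: there are an elementary extension
`N ⪰ M` and a parameter tuple `ē` in `N` such that `χ(f(ā)) = i` iff `N ⊨ φ i (ē, f(ā))`. -/
def ExtDefinableBy (L : FirstOrder.Language.{u, v}) (M : Type w) [L.Structure M]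
    (A : Type w) [L.Structure A]
    {k e : ℕ} (φ : Fin k → L.Formula (Fin e ⊕ A)) (χ : (A ↪[L] M) → Fin k) : Prop :=
  ∃ (N : Bundled.{w} L.Structure) (emb : M ↪ₑ[L] N) (eb : Fin e → N),
    ∀ (f : A ↪[L] M) (i : Fin k),
      χ f = i ↔ (φ i).Realize (Sum.elim eb fun a => emb (f a))

/-- `χ` is an externally definable `k`-colouring of the copies of `A` in `M`. -/
def ExtDefinable (L : FirstOrder.Language.{u, v}) (M : Type w) [L.Structure M]
    (A : Type w) [L.Structure A] {k : ℕ} (χ : (A ↪[L] M) → Fin k) : Prop :=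
  ∃ (e : ℕ) (φ : Fin k → L.Formula (Fin e ⊕ A)), ExtDefinableBy L M A φ χ

/-- The copy of `B` in `M` given by the embedding `g` is `χ`-monochromatic: `χ` is constant
on the copies of `A` lying inside the image of `g`. -/
def MonochromaticOn (L : FirstOrder.Language.{u, v}) (M : Type w) [L.Structure M]
    (A B : Type w) [L.Structure A] [L.Structure B]
    {k : ℕ} (χ : (A ↪[L] M) → Fin k) (g : B ↪[L] M) : Prop :=
  ∀ f₁ f₂ : A ↪[L] M, Set.range (f₁ : A → M) ⊆ Set.range (g : B → M) →
    Set.range (f₂ : A → M) ⊆ Set.range (g : B → M) → χ f₁ = χ f₂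

/-- `M` has the externally definable `ā`-Ramsey property, where `ā` enumerates `A`:
for every `k ≥ 1`, every `B` in the age of `M` and every externally definable `k`-colouring `χ`
of the copies of `A` in `M`, there is a `χ`-monochromatic copy of `B` in `M`. -/
def ExtDefARamsey (L : FirstOrder.Language.{u, v}) (M : Type w) [L.Structure M]
    (A : Type w) [L.Structure A] : Prop :=
  ∀ (k : ℕ), 1 ≤ k → ∀ (B : Type w) [L.Structure B], Finite B → Nonempty (B ↪[L] M) →
    ∀ χ : (A ↪[L] M) → Fin k, ExtDefinable L M A χ →
      ∃ g : B ↪[L] M, MonochromaticOn L M A B χ g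

/-- `M` has the externally definable Ramsey property. -/
def ExtDefRamsey (L : FirstOrder.Language.{u, v}) (M : Type w) [L.Structure M] : Prop :=
  ∀ (A : Type w) [L.Structure A], Finite A → Nonempty (A ↪[L] M) → ExtDefARamsey L M A

/-- `M` has FPT_n: every complete `n`-type over `M` (represented by a realization `bp` in an
elementary extension `N ⪰ M`) admits an `Aut(M)`-invariant complete `n`-type over `M`
(represented by a realization `bq` in an elementary extension `N' ⪰ M`) lying in the closure of
its `Aut(M)`-orbit, where `φ(x̄, m̄) ∈ tp(b̄/M)` means `φ` is realized by `(b̄, m̄)`. -/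
def FPTn (L : FirstOrder.Language.{u, v}) (M : Type w) [L.Structure M] (n : ℕ) : Prop :=
  ∀ (N : Bundled.{w} L.Structure) (embp : M ↪ₑ[L] N) (bp : Fin n → N),
    ∃ (N' : Bundled.{w} L.Structure) (embq : M ↪ₑ[L] N') (bq : Fin n → N'),
      (∀ (g : M ≃[L] M) (m : ℕ) (φ : L.Formula (Fin n ⊕ Fin m)) (mb : Fin m → M),
        φ.Realize (Sum.elim bq fun j => embq (mb j)) ↔
          φ.Realize (Sum.elim bq fun j => embq (g (mb j)))) ∧
      (∀ (m : ℕ) (φ : L.Formula (Fin n ⊕ Fin m)) (mb : Fin m → M),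
        φ.Realize (Sum.elim bq fun j => embq (mb j)) →
          ∃ g : M ≃[L] M, φ.Realize (Sum.elim bp fun j => embp (g (mb j))))

/-- `M` has the fixed points on type spaces property: `FPT_n` for all `n ≥ 1`. -/
def FPT (L : FirstOrder.Language.{u, v}) (M : Type w) [L.Structure M] : Prop :=
  ∀ n : ℕ, 1 ≤ n → FPTn L M n

variable {L : FirstOrder.Language.{u, v}} {M : Type w} [L.Structure M]

variable (L) in
/-- In a relational language, any set is (the carrier of) a substructure. -/
def relSub [L.IsRelational] (s : Set M) : L.Substructure M where
  carrier := s
  fun_mem := fun {n} f => isEmptyElim f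

@[simp] lemma mem_relSub [L.IsRelational] {s : Set M} {x : M} : x ∈ relSub L s ↔ x ∈ s := Iff.rfl

lemma relSub_le [L.IsRelational] {s t : Set M} (h : s ⊆ t) : relSub L s ≤ relSub L t := h

lemma finite_relSub [L.IsRelational] {s : Set M} (hs : s.Finite) : Finite ↥(relSub L s) :=
  hs.to_subtype

lemma fg_relSub [L.IsRelational] {s : Set M} (hs : s.Finite) : (relSub L s).FG := by
  haveI := finite_relSub (L := L) hs
  exact Substructure.FG.of_finite

section Factor
variable [L.IsRelational] {A B : Type*} [L.Structure A] [L.Structure B]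
  (f : A ↪[L] M) (h : B ↪[L] M) (hr : Set.range (f : A → M) ⊆ Set.range (h : B → M))

/-- Factor an embedding through another embedding containing its range: the function. -/
noncomputable def factorFun : A → B := fun a => (hr (Set.mem_range_self a)).choose

lemma factorFun_spec : ∀ a, h (factorFun f h hr a) = f a :=
  fun a => (hr (Set.mem_range_self a)).choose_spec

/-- Factor an embedding through another embedding containing its range. -/
noncomputable def factorEmb : A ↪[L] B where
  toFun := factorFun f h hr
  inj' a b hab := f.injective (by
    rw [← factorFun_spec f h hr a, ← factorFun_spec f h hr b]
    exact congrArg h hab)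
  map_fun' := fun {n} F => isEmptyElim F
  map_rel' := fun {n} r x => by
    have e1 : (⇑f ∘ x) = ⇑h ∘ (factorFun f h hr ∘ x) :=
      funext fun i => (factorFun_spec f h hr (x i)).symm
    have t := f.map_rel r x
    rw [e1] at t
    exact (h.map_rel r _).symm.trans t

lemma factorEmb_spec : ∀ a, h (factorEmb f h hr a) = f a := factorFun_spec f h hr

lemma factorEmb_comp_eq : ∀ a, (h.comp (factorEmb f h hr)) a = f a := factorFun_spec f h hr

end Factor

/-- Ultrahomogeneity: two embeddings of a finite structure differ by an automorphism. -/
lemma uh_two_emb (hM : L.IsUltrahomogeneous M) {A : Type*} [L.Structure A] [Finite A]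
    (f₁ f₂ : A ↪[L] M) : ∃ g : M ≃[L] M, ∀ a, g (f₁ a) = f₂ a := by
  obtain ⟨g, hg⟩ := hM f₁.toHom.range ((Structure.FG.of_finite).range f₁.toHom)
    (f₂.comp f₁.equivRange.symm.toEmbedding)
  refine ⟨g, fun a => ?_⟩
  have h1 := congr_fun (congr_arg DFunLike.coe hg) (f₁.equivRange a)
  have h2 : f₁.equivRange.symm.toEmbedding (f₁.equivRange a) = a := by
    simp
  have h3 : ((f₁.equivRange a : f₁.toHom.range) : M) = f₁ a := f₁.equivRange_apply a
  rw [Embedding.comp_apply, Embedding.comp_apply, h2] at h1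
  simp only [Substructure.coe_subtype, Equiv.coe_toEmbedding] at h1
  rw [h3] at h1
  exact h1.symm

/-- Ultrahomogeneity: an embedding of a finite "set-substructure" extends to an automorphism. -/
lemma uh_extend [L.IsRelational] (hM : L.IsUltrahomogeneous M) {s : Set M} (hs : s.Finite)
    (u : ↥(relSub L s) ↪[L] M) :
    ∃ g : M ≃[L] M, ∀ x (hx : x ∈ s), g x = u ⟨x, hx⟩ := by
  obtain ⟨g, hg⟩ := hM (relSub L s) (fg_relSub hs) u
  refine ⟨g, fun x hx => ?_⟩
  have h1 := congr_fun (congr_arg DFunLike.coe hg) ⟨x, hx⟩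
  simp only [Embedding.comp_apply, Substructure.coe_subtype, Equiv.coe_toEmbedding] at h1
  rw [h1]
  rfl

variable {L : FirstOrder.Language.{u, v}} {M : Type w} [L.Structure M]

/-- Conjunction of a list of formulas. -/
def listConj {α : Type*} (l : List (L.Formula α)) : L.Formula α := l.foldr (· ⊓ ·) ⊤

lemma realize_listConj {α : Type*} {N : Type*} [L.Structure N]
    {l : List (L.Formula α)} {v : α → N} :
    (listConj l).Realize v ↔ ∀ φ ∈ l, φ.Realize v := by
  induction l with
  | nil => simp [listConj]
  | cons a t ih =>
      simp only [listConj, List.foldr_cons, Formula.realize_inf, List.mem_cons] at *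
      constructor
      · rintro ⟨h1, h2⟩ φ (rfl | hm)
        · exact h1
        · exact ih.1 h2 φ hm
      · intro hh
        exact ⟨hh a (Or.inl rfl), ih.2 fun φ hm => hh φ (Or.inr hm)⟩

lemma realize_relabel_sumMap {α β : Type*} {e : ℕ} (φ : L.Formula (Fin e ⊕ α)) (r : α → β)
    {N : Type*} [L.Structure N] (vb : Fin e → N) (vβ : β → N) :
    (φ.relabel (Sum.map id r)).Realize (Sum.elim vb vβ) ↔ φ.Realize (Sum.elim vb (vβ ∘ r)) := by
  rw [Formula.realize_relabel]
  apply Iff.of_eq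
  congr 1
  funext x
  cases x <;> rfl


section SM
variable {L : FirstOrder.Language.{u, v}} {M : Type w} [L.Structure M]

lemma simulMono [L.IsRelational] (hM : L.IsUltrahomogeneous M)
    (ramsey : ExtDefRamsey L M)
    (N : Bundled.{w} L.Structure) (emb : M ↪ₑ[L] N) {e : ℕ} (b : Fin e → N)
    {J : Type*} [Finite J] (s : J → Set M) (hs : ∀ j, (s j).Finite)
    (ψ : ∀ j, L.Formula (Fin e ⊕ ↥(relSub L (s j))))
    (t : Set M) (ht : t.Finite) :
    ∃ h : ↥(relSub L t) ↪[L] M, ∀ (j : J) (f₁ f₂ : ↥(relSub L (s j)) ↪[L] M),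
      Set.range (f₁ : _ → M) ⊆ Set.range (h : _ → M) →
      Set.range (f₂ : _ → M) ⊆ Set.range (h : _ → M) →
      ((ψ j).Realize (Sum.elim b (fun x => emb (f₁ x))) ↔
       (ψ j).Realize (Sum.elim b (fun x => emb (f₂ x)))) := by
  classical
  haveI : Fintype J := Fintype.ofFinite J
  -- the big finite structure containing all the `s j`
  set S : Set M := ⋃ j, s j with hSdef
  have hS : S.Finite := Set.finite_iUnion hs
  have hsub : ∀ j, s j ⊆ S := fun j => Set.subset_iUnion s j
  let A := ↥(relSub L S)
  let ι : ∀ j, ↥(relSub L (s j)) ↪[L] A := fun j => Substructure.inclusion (relSub_le (hsub j))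
  have hι : ∀ j x, ((ι j x : A) : M) = (x : M) := fun j x => rfl
  -- the product colouring
  let col : (A ↪[L] M) → (J → Bool) := fun f j =>
    decide ((ψ j).Realize (Sum.elim b (fun x => emb (f (ι j x)))))
  let k := Fintype.card (J → Bool)
  let eqv : (J → Bool) ≃ Fin k := Fintype.equivFin _
  let χ : (A ↪[L] M) → Fin k := fun f => eqv (col f)
  -- external definability of the product colouring
  let Φ : Fin k → L.Formula (Fin e ⊕ A) := fun i =>
    listConj ((Finset.univ : Finset J).toList.map fun j =>
      if (eqv.symm i j : Bool) then (ψ j).relabel (Sum.map id (ι j))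
      else ((ψ j).relabel (Sum.map id (ι j))).not)
  have hdef : ExtDefinableBy L M A Φ χ := by
    refine ⟨N, emb, b, fun f i => ?_⟩
    have hreal : ∀ j, ((ψ j).relabel (Sum.map id (ι j))).Realize
        (Sum.elim b fun a => emb (f a)) ↔
        (ψ j).Realize (Sum.elim b (fun x => emb (f (ι j x)))) := by
      intro j
      rw [realize_relabel_sumMap]
      rfl
    constructor
    · rintro rfl
      rw [Formula.Realize] at *
      show (Φ (χ f)).Realize _
      rw [show (Φ (χ f)).Realize (Sum.elim b fun a => emb (f a)) ↔ _ from realize_listConj]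
      intro φ hφ
      simp only [List.mem_map, Finset.mem_toList, Finset.mem_univ, true_and] at hφ
      obtain ⟨j, rfl⟩ := hφ
      have hsy : (eqv.symm (χ f)) = col f := by simp [χ]
      rw [hsy]
      by_cases hc : (ψ j).Realize (Sum.elim b (fun x => emb (f (ι j x))))
      · rw [if_pos (show col f j = true from decide_eq_true hc), hreal j]
        exact hc
      · rw [if_neg (show ¬ col f j = true from fun hh => hc (of_decide_eq_true hh)),
          Formula.realize_not, hreal j]
        exact hc
    · intro hΦ
      have h1 : ∀ j, (col f j) = (eqv.symm i j) := by
        intro j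
        have := (realize_listConj).1 hΦ
          ((if (eqv.symm i j : Bool) then (ψ j).relabel (Sum.map id (ι j))
            else ((ψ j).relabel (Sum.map id (ι j))).not))
          (by
            simp only [List.mem_map, Finset.mem_toList, Finset.mem_univ, true_and]
            exact ⟨j, rfl⟩)
        by_cases hc : (eqv.symm i j : Bool) = true
        · rw [hc]
          rw [if_pos hc, hreal j] at this
          exact decide_eq_true this
        · rw [if_neg hc, Formula.realize_not, hreal j] at this
          rw [Bool.not_eq_true] at hc
          rw [hc]
          exact decide_eq_false this
      have : col f = eqv.symm i := funext h1
      show eqv (col f) = i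
      rw [this]
      simp
  -- the extension copies
  let Uj : ∀ _ : J, Type _ := fun j => {u : ↥(relSub L (s j)) ↪[L] M // Set.range (u : _ → M) ⊆ t}
  haveI hUfin : ∀ j, Finite (Uj j) := by
    intro j
    haveI : Finite ↥(relSub L (s j)) := finite_relSub (hs j)
    haveI : Finite ↥t := ht.to_subtype
    refine Finite.of_injective
      (fun u : Uj j => (fun x => (⟨u.1 x, u.2 (Set.mem_range_self x)⟩ : ↥t))) ?_
    intro u₁ u₂ h12
    ext x
    exact congrArg Subtype.val (congr_fun h12 x)
  have hgext : ∀ (j : J) (u : Uj j), ∃ g : M ≃[L] M,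
      ∀ x : ↥(relSub L (s j)), g ((x : M)) = u.1 x := by
    intro j u
    haveI : Finite ↥(relSub L (s j)) := finite_relSub (hs j)
    exact uh_two_emb hM (relSub L (s j)).subtype u.1
  choose gext hgext' using hgext
  let bigT : Set M := t ∪ ⋃ p : Σ j, Uj j, (gext p.1 p.2) '' S
  have htsub : t ⊆ bigT := Set.subset_union_left
  have hbigT : bigT.Finite := ht.union (Set.finite_iUnion fun p => hS.image _)
  -- apply the Ramsey hypothesis
  have hfinA : Finite A := finite_relSub hS
  have hfinB : Finite ↥(relSub L bigT) := finite_relSub hbigT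
  obtain ⟨gB, hmono⟩ := ramsey A hfinA ⟨(relSub L S).subtype⟩ k
    (Fintype.card_pos) (↥(relSub L bigT)) hfinB ⟨(relSub L bigT).subtype⟩
    χ ⟨e, Φ, hdef⟩
  let h : ↥(relSub L t) ↪[L] M := gB.comp (Substructure.inclusion (relSub_le htsub))
  have hhran : Set.range (h : _ → M) ⊆ Set.range (gB : _ → M) := by
    rintro x ⟨y, rfl⟩
    exact ⟨_, rfl⟩
  refine ⟨h, fun j f₁ f₂ hr₁ hr₂ => ?_⟩
  -- key: extend a small copy inside `h` to a big copy inside `gB`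
  have key : ∀ f : ↥(relSub L (s j)) ↪[L] M, Set.range (f : _ → M) ⊆ Set.range (h : _ → M) →
      ∃ fA : A ↪[L] M, Set.range (fA : _ → M) ⊆ Set.range (gB : _ → M) ∧
        ∀ x, fA (ι j x) = f x := by
    intro f hr
    let u' := factorEmb f gB (hr.trans hhran)
    have hu' : ∀ x, gB (u' x) = f x := factorEmb_spec f gB (hr.trans hhran)
    have hu't : ∀ x, ((u' x : ↥(relSub L bigT)) : M) ∈ t := by
      intro x
      obtain ⟨y, hy⟩ := hr (Set.mem_range_self x)
      have : u' x = Substructure.inclusion (relSub_le htsub) y := by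
        apply gB.injective
        rw [hu' x, ← hy]
        rfl
      rw [this]
      exact y.2
    let uhat : ↥(relSub L (s j)) ↪[L] M := ((relSub L bigT).subtype).comp u'
    have huhatt : Set.range (uhat : _ → M) ⊆ t := by
      rintro x ⟨y, rfl⟩
      exact hu't y
    let uu : Uj j := ⟨uhat, huhatt⟩
    let g := gext j uu
    have hg : ∀ x : ↥(relSub L (s j)), g (x : M) = ((u' x : ↥(relSub L bigT)) : M) :=
      fun x => hgext' j uu x
    let wemb : A ↪[L] M := g.toEmbedding.comp (relSub L S).subtype
    have hwran : Set.range (wemb : _ → M) ⊆ bigT := by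
      rintro x ⟨y, rfl⟩
      refine Set.mem_union_right _ (Set.mem_iUnion.2 ⟨⟨j, uu⟩, ⟨(y : M), y.2, rfl⟩⟩)
    have hwsub : Set.range (wemb : _ → M) ⊆ Set.range ((relSub L bigT).subtype : _ → M) := by
      rw [Substructure.coe_subtype]
      rwa [Subtype.range_coe]
    let what := factorEmb wemb (relSub L bigT).subtype hwsub
    have hwhat : ∀ a, ((what a : ↥(relSub L bigT)) : M) = wemb a := factorEmb_spec wemb _ hwsub
    refine ⟨gB.comp what, ?_, ?_⟩
    · rintro x ⟨y, rfl⟩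
      exact ⟨_, rfl⟩
    · intro x
      have h1 : what (ι j x) = u' x := by
        apply Subtype.val_injective
        rw [hwhat (ι j x)]
        show wemb (ι j x) = _
        have : wemb (ι j x) = g ((ι j x : A) : M) := rfl
        rw [this, hι j x, hg x]
      show gB (what (ι j x)) = f x
      rw [h1, hu' x]
  obtain ⟨f₁A, hf₁r, hf₁⟩ := key f₁ hr₁
  obtain ⟨f₂A, hf₂r, hf₂⟩ := key f₂ hr₂
  have hχ : χ f₁A = χ f₂A := hmono f₁A f₂A hf₁r hf₂r
  have hcol : col f₁A = col f₂A := eqv.injective hχ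
  have hj := congr_fun hcol j
  have e₁ : (Sum.elim b fun x => emb (f₁A (ι j x))) = (Sum.elim b fun x => emb (f₁ x)) :=
    congrArg (Sum.elim b) (funext fun x => by rw [hf₁ x])
  have e₂ : (Sum.elim b fun x => emb (f₂A (ι j x))) = (Sum.elim b fun x => emb (f₂ x)) :=
    congrArg (Sum.elim b) (funext fun x => by rw [hf₂ x])
  simp only [col, e₁, e₂] at hj
  exact decide_eq_decide.mp hj

end SM

section Backward
variable {L : FirstOrder.Language.{u, v}} {M : Type w} [L.Structure M]

lemma fpt_to_extDefRamsey [L.IsRelational] (hM : L.IsUltrahomogeneous M) (hF : FPT L M) :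
    ExtDefRamsey L M := by
  classical
  intro A _ finA neA k hk B _ finB neB χ hχ
  obtain ⟨e, φs, N, emb, eb, hdef⟩ := hχ
  -- obtain the invariant-type witness (from FPT if `e ≥ 1`, directly if `e = 0`)
  obtain ⟨N', embq, bq, hinv, hcl⟩ :
      ∃ (N' : Bundled.{w} L.Structure) (embq : M ↪ₑ[L] N') (bq : Fin e → N'),
        (∀ (g : M ≃[L] M) (m : ℕ) (φ : L.Formula (Fin e ⊕ Fin m)) (mb : Fin m → M),
          φ.Realize (Sum.elim bq fun j => embq (mb j)) ↔
            φ.Realize (Sum.elim bq fun j => embq (g (mb j)))) ∧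
        (∀ (m : ℕ) (φ : L.Formula (Fin e ⊕ Fin m)) (mb : Fin m → M),
          φ.Realize (Sum.elim bq fun j => embq (mb j)) →
            ∃ g : M ≃[L] M, φ.Realize (Sum.elim eb fun j => emb (g (mb j)))) := by
    rcases Nat.eq_zero_or_pos e with he | he
    · subst he
      refine ⟨N, emb, eb, ?_, ?_⟩
      · intro g m φ mb
        have hy : ∀ x : Fin m → M,
            (Sum.elim eb fun j => emb (x j)) =
              (emb : M → N) ∘ (Sum.elim (fun q : Fin 0 => q.elim0) x) := by
          intro x
          funext i
          cases i with
          | inl q => exact q.elim0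
          | inr q => rfl
        have hgc : (Sum.elim (fun q : Fin 0 => q.elim0) (fun j => g (mb j))) =
            (g : M → M) ∘ (Sum.elim (fun q : Fin 0 => q.elim0) mb) := by
          funext i
          cases i with
          | inl q => exact q.elim0
          | inr q => rfl
        rw [hy mb, hy (fun j => g (mb j)), emb.map_formula, emb.map_formula, hgc,
          StrongHomClass.realize_formula]
      · intro m φ mb hφ
        refine ⟨FirstOrder.Language.Equiv.refl L M, ?_⟩
        simpa only [FirstOrder.Language.Equiv.refl_apply] using hφ
    · exact hF e he N emb eb
  haveI : Fintype A := Fintype.ofFinite A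
  set m₀ := Fintype.card A with hm₀
  set ea : A ≃ Fin m₀ := Fintype.equivFin A with hea
  -- bridge between `A`-indexed and `Fin m₀`-indexed valuations
  have bridge : ∀ {P : Type w} [iP : L.Structure P] (θ : L.Formula (Fin e ⊕ A))
      (vb : Fin e → P) (u : A → P),
      (θ.relabel (Sum.map id ea)).Realize (Sum.elim vb (u ∘ ⇑ea.symm)) ↔
        θ.Realize (Sum.elim vb u) := by
    intro P iP θ vb u
    rw [realize_relabel_sumMap]
    have huu : (u ∘ ⇑ea.symm) ∘ ⇑ea = u := by
      funext a
      simp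
    rw [huu]
  -- every copy of `A` gets exactly one colour from the invariant type
  have huniq : ∀ f : A ↪[L] M,
      ∃! i : Fin k, (φs i).Realize (Sum.elim bq fun a => embq (f a)) := by
    intro f
    have hex : ∃ i, (φs i).Realize (Sum.elim bq fun a => embq (f a)) := by
      by_contra hne
      push_neg at hne
      set Ψ : L.Formula (Fin e ⊕ Fin m₀) :=
        listConj ((List.finRange k).map fun i => ((φs i).relabel (Sum.map id ea)).not) with hΨ
      have hreal : Ψ.Realize (Sum.elim bq ((fun a => embq (f a)) ∘ ⇑ea.symm)) := by
        rw [hΨ, realize_listConj]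
        intro ψ hψ
        simp only [List.mem_map, List.mem_finRange, true_and] at hψ
        obtain ⟨i, rfl⟩ := hψ
        rw [Formula.realize_not]
        intro hco
        exact hne i ((bridge (φs i) bq _).1 hco)
      obtain ⟨g, hg⟩ := hcl m₀ Ψ (⇑f ∘ ⇑ea.symm) hreal
      set i := χ (g.toEmbedding.comp f) with hi
      rw [hΨ, realize_listConj] at hg
      have h2 := hg (((φs i).relabel (Sum.map id ea)).not)
        (by
          simp only [List.mem_map, List.mem_finRange, true_and]
          exact ⟨i, rfl⟩)
      rw [Formula.realize_not] at h2
      apply h2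
      have h4 := (bridge (φs i) eb (fun a => emb (g (f a)))).2
      have h5 : (φs i).Realize (Sum.elim eb fun a => emb (g (f a))) := by
        have h6 := (hdef (g.toEmbedding.comp f) i).1 hi.symm
        have h7 : (fun a => emb ((g.toEmbedding.comp f) a)) = fun a => emb (g (f a)) := by
          funext a
          simp [Embedding.comp_apply]
        rw [h7] at h6
        exact h6
      exact h4 h5
    obtain ⟨i₁, hi₁⟩ := hex
    refine ⟨i₁, hi₁, fun i₂ hi₂ => ?_⟩
    by_contra hne12
    set Ψ : L.Formula (Fin e ⊕ Fin m₀) :=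
      ((φs i₂).relabel (Sum.map id ea)) ⊓ ((φs i₁).relabel (Sum.map id ea)) with hΨ
    have hreal : Ψ.Realize (Sum.elim bq ((fun a => embq (f a)) ∘ ⇑ea.symm)) := by
      rw [hΨ, Formula.realize_inf]
      exact ⟨(bridge (φs i₂) bq _).2 hi₂, (bridge (φs i₁) bq _).2 hi₁⟩
    obtain ⟨g, hg⟩ := hcl m₀ Ψ (⇑f ∘ ⇑ea.symm) hreal
    rw [hΨ, Formula.realize_inf] at hg
    have hco : ∀ i : Fin k, ((φs i).relabel (Sum.map id ea)).Realize
        (Sum.elim eb fun j => emb (g ((⇑f ∘ ⇑ea.symm) j))) →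
        χ (g.toEmbedding.comp f) = i := by
      intro i hii
      have h5 := (bridge (φs i) eb (fun a => emb (g (f a)))).1 hii
      refine (hdef (g.toEmbedding.comp f) i).2 ?_
      have h7 : (fun a => emb ((g.toEmbedding.comp f) a)) = fun a => emb (g (f a)) := by
        funext a
        simp [Embedding.comp_apply]
      rw [h7]
      exact h5
    exact hne12 ((hco i₂ hg.1) ▸ (hco i₁ hg.2))
  choose χq hχq huq using huniq
  -- `χq` is `Aut(M)`-invariant
  have hInv : ∀ (g : M ≃[L] M) (f : A ↪[L] M), χq (g.toEmbedding.comp f) = χq f := by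
    intro g f
    have b1 := bridge (φs (χq (g.toEmbedding.comp f))) bq (fun a => embq (f a))
    have b2 := bridge (φs (χq (g.toEmbedding.comp f))) bq (fun a => embq (g (f a)))
    have b3 := hinv g m₀ ((φs (χq (g.toEmbedding.comp f))).relabel (Sum.map id ea))
      (⇑f ∘ ⇑ea.symm)
    have hstart := hχq (g.toEmbedding.comp f)
    have h7 : (fun a => embq ((g.toEmbedding.comp f) a)) = fun a => embq (g (f a)) := by
      funext a
      simp [Embedding.comp_apply]
    rw [h7] at hstart
    exact huq f _ (b1.1 (b3.2 (b2.2 hstart)))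
  -- `χq` is constant
  have hconst : ∀ f₁ f₂ : A ↪[L] M, χq f₁ = χq f₂ := by
    intro f₁ f₂
    obtain ⟨g, hg⟩ := uh_two_emb hM f₁ f₂
    have hc : g.toEmbedding.comp f₁ = f₂ := by
      apply DFunLike.ext
      intro a
      simpa [Embedding.comp_apply] using hg a
    rw [← hc, hInv]
  obtain ⟨f₀⟩ := neA
  obtain ⟨h₀⟩ := neB
  set i₀ := χq f₀ with hi₀
  haveI : Finite (A ↪[L] B) := Finite.of_injective (fun u => (u : A → B)) DFunLike.coe_injective
  haveI : Fintype (A ↪[L] B) := Fintype.ofFinite _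
  haveI : Fintype B := Fintype.ofFinite B
  set mB := Fintype.card B with hmB
  set eB : B ≃ Fin mB := Fintype.equivFin B with heB
  set Θ : L.Formula (Fin e ⊕ Fin mB) :=
    listConj ((Finset.univ : Finset (A ↪[L] B)).toList.map fun u =>
      (φs i₀).relabel (Sum.map id (fun a => eB (u a)))) with hΘ
  have hΘq : Θ.Realize (Sum.elim bq fun j => embq ((⇑h₀ ∘ ⇑eB.symm) j)) := by
    rw [hΘ, realize_listConj]
    intro ψ hψ
    simp only [List.mem_map, Finset.mem_toList, Finset.mem_univ, true_and] at hψ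
    obtain ⟨u, rfl⟩ := hψ
    rw [realize_relabel_sumMap]
    have h7 : ((fun j => embq (h₀ (eB.symm j))) ∘ (fun a => eB (u a)))
        = (fun a => embq ((h₀.comp u) a)) := by
      funext a
      simp [Embedding.comp_apply]
    show (φs i₀).Realize (Sum.elim bq ((fun j => embq (h₀ (eB.symm j))) ∘ (fun a => eB (u a))))
    rw [h7]
    have h8 : χq (h₀.comp u) = i₀ := hconst (h₀.comp u) f₀
    have h9 := hχq (h₀.comp u)
    rw [h8] at h9
    exact h9
  obtain ⟨g, hg⟩ := hcl mB Θ (⇑h₀ ∘ ⇑eB.symm) hΘq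
  refine ⟨(g.toEmbedding.comp h₀ : B ↪[L] M), ?_⟩
  have hval : ∀ u : A ↪[L] B, χ ((g.toEmbedding.comp h₀).comp u) = i₀ := by
    intro u
    rw [hΘ, realize_listConj] at hg
    have h8 := hg ((φs i₀).relabel (Sum.map id (fun a => eB (u a))))
      (by
        simp only [List.mem_map, Finset.mem_toList, Finset.mem_univ, true_and]
        exact ⟨u, rfl⟩)
    rw [realize_relabel_sumMap] at h8
    have h9 : ((fun j => emb (g ((⇑h₀ ∘ ⇑eB.symm) j))) ∘ (fun a => eB (u a)))
        = (fun a => emb (((g.toEmbedding.comp h₀).comp u) a)) := by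
      funext a
      simp [Embedding.comp_apply]
    have h10 : (φs i₀).Realize
        (Sum.elim eb ((fun j => emb (g ((⇑h₀ ∘ ⇑eB.symm) j))) ∘ (fun a => eB (u a)))) := h8
    rw [h9] at h10
    exact (hdef ((g.toEmbedding.comp h₀).comp u) i₀).2 h10
  intro p₁ p₂ hp₁ hp₂
  have hpe₁ : (g.toEmbedding.comp h₀).comp (factorEmb p₁ (g.toEmbedding.comp h₀) hp₁) = p₁ :=
    DFunLike.ext _ _ (factorEmb_spec p₁ (g.toEmbedding.comp h₀) hp₁)
  have hpe₂ : (g.toEmbedding.comp h₀).comp (factorEmb p₂ (g.toEmbedding.comp h₀) hp₂) = p₂ :=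
    DFunLike.ext _ _ (factorEmb_spec p₂ (g.toEmbedding.comp h₀) hp₂)
  rw [← hpe₁, ← hpe₂, hval, hval]

end Backward

section Forward
variable {L : FirstOrder.Language.{u, v}} {M : Type w} [L.Structure M]

/-- Restriction of an automorphism to an embedding between set-substructures. -/
def mapIntoEmb [L.IsRelational] (g : M ≃[L] M) {s t : Set M} (hst : ∀ x ∈ s, g x ∈ t) :
    ↥(relSub L s) ↪[L] ↥(relSub L t) where
  toFun x := ⟨g x.1, hst x.1 x.2⟩
  inj' x y hxy := Subtype.ext (g.injective (congrArg Subtype.val hxy))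
  map_fun' := fun {m} F => isEmptyElim F
  map_rel' := fun {m} r x => by
    have h1 : ∀ y : Fin m → ↥(relSub L t), Structure.RelMap r y ↔
        Structure.RelMap r (fun i => ((y i : M))) := fun _ => Iff.rfl
    have h2 : ∀ y : Fin m → ↥(relSub L s), Structure.RelMap r y ↔
        Structure.RelMap r (fun i => ((y i : M))) := fun _ => Iff.rfl
    rw [h1, h2]
    have h3 : (fun i => (((⟨g (x i).1, hst (x i).1 (x i).2⟩ : ↥(relSub L t))) : M)) =
        (g : M → M) ∘ (fun i => ((x i : M))) := rfl
    show Structure.RelMap r (fun i => (((⟨g (x i).1, hst (x i).1 (x i).2⟩ : ↥(relSub L t))) : M))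
      ↔ _
    rw [h3, g.map_rel]

/-- A "condition": a formula together with a tuple of parameters from `M`. -/
abbrev Cond (L : FirstOrder.Language.{u, v}) (M : Type w) (n : ℕ) :=
  Σ m : ℕ, L.Formula (Fin n ⊕ Fin m) × (Fin m → M)

lemma stepA [L.IsRelational] (hM : L.IsUltrahomogeneous M) (ram : ExtDefRamsey L M)
    {n : ℕ} (N : Bundled.{w} L.Structure) (emb : M ↪ₑ[L] N) (b : Fin n → N) :
    ∃ (U : Ultrafilter (Finset (Cond L M n))) (Q : Cond L M n → Bool)
      (G : Finset (Cond L M n) → (M ≃[L] M)),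
      (∀ (m : ℕ) (φ : L.Formula (Fin n ⊕ Fin m)) (mb : Fin m → M) (g : M ≃[L] M),
        Q ⟨m, φ, mb⟩ = Q ⟨m, φ, fun i => g (mb i)⟩) ∧
      (∀ c : Cond L M n,
        {E : Finset (Cond L M n) |
          ((c.2.1).Realize (Sum.elim b fun i => emb (G E (c.2.2 i))) ↔ Q c = true)} ∈ U) := by
  classical
  -- the finite set of parameters appearing in a finite set of conditions
  let bSet : Finset (Cond L M n) → Set M := fun E => ⋃ c ∈ E, Set.range c.2.2
  have hbfin : ∀ E, (bSet E).Finite :=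
    fun E => Set.Finite.biUnion E.finite_toSet fun c _ => Set.finite_range _
  have hmem : ∀ (E) (c : Cond L M n), c ∈ E → ∀ i, c.2.2 i ∈ bSet E :=
    fun E c hc i => Set.mem_biUnion hc (Set.mem_range_self i)
  have hrsub : ∀ (E) (c : Cond L M n), c ∈ E → Set.range c.2.2 ⊆ bSet E := by
    rintro E c hc x ⟨i, rfl⟩
    exact hmem E c hc i
  -- the canonical enumeration of the parameters of a condition
  let pat : ∀ c : Cond L M n, Fin c.1 → ↥(relSub L (Set.range c.2.2)) :=
    fun c i => ⟨c.2.2 i, Set.mem_range_self i⟩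
  -- simultaneously monochromatic copies
  have hSM : ∀ E : Finset (Cond L M n), ∃ h : ↥(relSub L (bSet E)) ↪[L] M,
      ∀ (cc : {c : Cond L M n // c ∈ E})
        (f₁ f₂ : ↥(relSub L (Set.range cc.1.2.2)) ↪[L] M),
        Set.range (f₁ : _ → M) ⊆ Set.range (h : _ → M) →
        Set.range (f₂ : _ → M) ⊆ Set.range (h : _ → M) →
        (((cc.1.2.1).relabel (Sum.map id (pat cc.1))).Realize
            (Sum.elim b fun x => emb (f₁ x)) ↔
          ((cc.1.2.1).relabel (Sum.map id (pat cc.1))).Realize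
            (Sum.elim b fun x => emb (f₂ x))) := by
    intro E
    exact simulMono hM ram N emb b (J := {c : Cond L M n // c ∈ E})
      (s := fun cc => Set.range cc.1.2.2)
      (fun cc => Set.finite_range _)
      (ψ := fun cc => (cc.1.2.1).relabel (Sum.map id (pat cc.1))) (bSet E) (hbfin E)
  choose hEmb hMono using hSM
  -- the colour of a condition in the monochromatic copy for `E`
  let vE : Finset (Cond L M n) → Cond L M n → Bool := fun E c =>
    if hc : c ∈ E then
      decide ((c.2.1).Realize (Sum.elim b fun i => emb (hEmb E ⟨c.2.2 i, hmem E c hc i⟩)))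
    else false
  have hvE : ∀ (E) (c : Cond L M n) (hc : c ∈ E),
      (vE E c = true ↔
        (c.2.1).Realize (Sum.elim b fun i => emb (hEmb E ⟨c.2.2 i, hmem E c hc i⟩))) := by
    intro E c hc
    show (dite _ _ _ = true) ↔ _
    rw [dif_pos hc, decide_eq_true_eq]
  -- invariance of the colour within a common `E`
  have hvinv : ∀ (E) (m : ℕ) (φ : L.Formula (Fin n ⊕ Fin m)) (mb : Fin m → M) (g : M ≃[L] M),
      (⟨m, φ, mb⟩ : Cond L M n) ∈ E → (⟨m, φ, fun i => g (mb i)⟩ : Cond L M n) ∈ E →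
      vE E ⟨m, φ, mb⟩ = vE E ⟨m, φ, fun i => g (mb i)⟩ := by
    intro E m φ mb g hc hc'
    set c : Cond L M n := ⟨m, φ, mb⟩ with hcdef
    set c' : Cond L M n := ⟨m, φ, fun i => g (mb i)⟩ with hc'def
    have hst : ∀ x ∈ Set.range c.2.2, g x ∈ Set.range c'.2.2 := by
      rintro x ⟨i, rfl⟩
      exact ⟨i, rfl⟩
    let f₁ : ↥(relSub L (Set.range c.2.2)) ↪[L] M :=
      (hEmb E).comp (Substructure.inclusion (relSub_le (hrsub E c hc)))
    let f₂ : ↥(relSub L (Set.range c.2.2)) ↪[L] M :=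
      (hEmb E).comp ((Substructure.inclusion (relSub_le (hrsub E c' hc'))).comp
        (mapIntoEmb g hst))
    have hr₁ : Set.range (f₁ : _ → M) ⊆ Set.range ((hEmb E) : _ → M) := by
      rintro x ⟨y, rfl⟩
      exact ⟨_, rfl⟩
    have hr₂ : Set.range (f₂ : _ → M) ⊆ Set.range ((hEmb E) : _ → M) := by
      rintro x ⟨y, rfl⟩
      exact ⟨_, rfl⟩
    have hiff := hMono E ⟨c, hc⟩ f₁ f₂ hr₁ hr₂
    rw [realize_relabel_sumMap, realize_relabel_sumMap] at hiff
    have key₁ : ((fun x => emb (f₁ x)) ∘ pat c) =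
        fun i => emb (hEmb E ⟨c.2.2 i, hmem E c hc i⟩) := rfl
    have key₂ : ((fun x => emb (f₂ x)) ∘ pat c) =
        fun i => emb (hEmb E ⟨c'.2.2 i, hmem E c' hc' i⟩) := rfl
    rw [key₁, key₂] at hiff
    have h₁ := hvE E c hc
    have h₂ := hvE E c' hc'
    have : (vE E c = true) ↔ (vE E c' = true) := by
      rw [h₁, h₂]
      exact hiff
    exact Bool.eq_iff_iff.mpr this
  -- the ultrafilter and the limit colouring
  haveI : Nonempty (Finset (Cond L M n)) := ⟨∅⟩
  let U : Ultrafilter (Finset (Cond L M n)) := Ultrafilter.of Filter.atTop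
  have hUat : ∀ E₀ : Finset (Cond L M n), {E | E₀ ⊆ E} ∈ U := by
    intro E₀
    apply Filter.le_def.1 (Ultrafilter.of_le Filter.atTop)
    exact Filter.mem_atTop E₀
  let Q : Cond L M n → Bool := fun c => decide ({E | vE E c = true} ∈ U)
  have hQ : ∀ c, {E | vE E c = Q c} ∈ U := by
    intro c
    by_cases hc : {E | vE E c = true} ∈ U
    · have : Q c = true := decide_eq_true hc
      rw [this]
      exact hc
    · have hq : Q c = false := decide_eq_false hc
      rw [hq]
      have := (Ultrafilter.compl_mem_iff_notMem).2 hc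
      have hss : {E | vE E c = true}ᶜ = {E | vE E c = false} := by
        ext E
        simp [Bool.not_eq_true]
      rwa [hss] at this
  -- invariance of the limit colouring
  have hQinv : ∀ (m : ℕ) (φ : L.Formula (Fin n ⊕ Fin m)) (mb : Fin m → M) (g : M ≃[L] M),
      Q ⟨m, φ, mb⟩ = Q ⟨m, φ, fun i => g (mb i)⟩ := by
    intro m φ mb g
    set c : Cond L M n := ⟨m, φ, mb⟩
    set c' : Cond L M n := ⟨m, φ, fun i => g (mb i)⟩
    have hU : ({E | vE E c = Q c} ∩ ({E | vE E c' = Q c'} ∩ {E | {c, c'} ⊆ E})) ∈ U :=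
      Filter.inter_mem (hQ c) (Filter.inter_mem (hQ c') (hUat {c, c'}))
    obtain ⟨E, hE1, hE2, hE3⟩ := Ultrafilter.nonempty_of_mem hU
    have hcE : c ∈ E := hE3 (Finset.mem_insert_self c {c'})
    have hc'E : c' ∈ E := hE3 (Finset.mem_insert_of_mem (Finset.mem_singleton_self c'))
    rw [← hE1, ← hE2]
    exact hvinv E m φ mb g hcE hc'E
  -- automorphisms extending the monochromatic copies
  have hGex : ∀ E, ∃ g : M ≃[L] M, ∀ x (hx : x ∈ bSet E), g x = hEmb E ⟨x, hx⟩ :=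
    fun E => uh_extend hM (hbfin E) (hEmb E)
  choose G hG using hGex
  refine ⟨U, Q, G, hQinv, ?_⟩
  intro c
  have hsub : {E | c ∈ E ∧ vE E c = Q c} ⊆
      {E | ((c.2.1).Realize (Sum.elim b fun i => emb (G E (c.2.2 i))) ↔ Q c = true)} := by
    rintro E ⟨hcE, hvQ⟩
    have h1 : (fun i => emb (G E (c.2.2 i))) =
        fun i => emb (hEmb E ⟨c.2.2 i, hmem E c hcE i⟩) := by
      funext i
      rw [hG E (c.2.2 i) (hmem E c hcE i)]
    show (c.2.1).Realize (Sum.elim b fun i => emb (G E (c.2.2 i))) ↔ Q c = true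
    rw [h1, ← hvE E c hcE, hvQ]
  refine Filter.mem_of_superset ?_ hsub
  have : {E | c ∈ E ∧ vE E c = Q c} = {E | ({c} : Finset _) ⊆ E} ∩ {E | vE E c = Q c} := by
    ext E
    simp [Finset.singleton_subset_iff]
  rw [this]
  exact Filter.inter_mem (hUat {c}) (hQ c)

end Forward

section Forward2
variable {L : FirstOrder.Language.{u, v}} {M : Type w} [L.Structure M]

lemma extDefRamsey_to_fpt [L.IsRelational] [Countable L.Symbols]
    (hM : L.IsUltrahomogeneous M) (ram : ExtDefRamsey L M) : FPT L M := by
  classical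
  intro n hn N emb b
  obtain ⟨U, Q, G, hQinv, hQreal⟩ := stepA hM ram N emb b
  -- countability of the coding of conditions
  haveI hRelCount : Countable (Σ l, L.Relations l) :=
    (Sum.inr_injective (α := Σ l, L.Functions l)).countable
  haveI hBF : ∀ m : ℕ, Countable (Σ k, L.BoundedFormula (Fin n ⊕ Fin m) k) := fun m =>
    (BoundedFormula.listEncode_sigma_injective).countable
  haveI hFor : ∀ m : ℕ, Countable (L.Formula (Fin n ⊕ Fin m)) := fun m =>
    (sigma_mk_injective (i := 0)
      (β := fun k => L.BoundedFormula (Fin n ⊕ Fin m) k)).countable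
  haveI hSig : Countable (Σ m : ℕ, L.Formula (Fin n ⊕ Fin m)) := inferInstance
  obtain ⟨enc, henc⟩ := Countable.exists_injective_nat (Σ m : ℕ, L.Formula (Fin n ⊕ Fin m))
  -- `Type w` coding of conditions
  let CondW : Type w := Σ mm : ULift.{w} ℕ, (Fin mm.down → M) × ULift.{w} ℕ
  let cInj : Cond L M n → CondW := fun c => ⟨⟨c.1⟩, c.2.2, ⟨enc ⟨c.1, c.2.1⟩⟩⟩
  have hcInj : Function.Injective cInj := by
    rintro ⟨m, φ, mb⟩ ⟨m', φ', mb'⟩ h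
    obtain ⟨h1, h2⟩ := Sigma.mk.inj_iff.1 h
    have hm : m = m' := congrArg ULift.down h1
    subst hm
    rw [heq_iff_eq] at h2
    obtain ⟨h3, h4⟩ := Prod.ext_iff.1 h2
    have h5 : (⟨m, φ⟩ : Σ m, L.Formula (Fin n ⊕ Fin m)) = ⟨m, φ'⟩ :=
      henc (congrArg ULift.down h4)
    have h6 : φ = φ' := eq_of_heq (Sigma.mk.inj_iff.1 h5).2
    subst h6
    have h7 : mb = mb' := h3
    subst h7
    rfl
  let κ : Finset (Cond L M n) → Finset CondW := fun E => E.image cInj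
  let V : Ultrafilter (Finset CondW) := U.map κ
  let pre : Finset CondW → Finset (Cond L M n) := fun F => F.preimage cInj hcInj.injOn
  have hpre : ∀ E, pre (κ E) = E := by
    intro E
    ext c
    rw [Finset.mem_preimage]
    constructor
    · intro hc
      obtain ⟨c', hc', heq⟩ := Finset.mem_image.1 hc
      exact (hcInj heq) ▸ hc'
    · intro hc
      exact Finset.mem_image.2 ⟨c, hc, rfl⟩
  let G' : Finset CondW → (M ≃[L] M) := fun F => G (pre F)
  have hrealV : ∀ c : Cond L M n,
      {F | ((c.2.1).Realize (Sum.elim b fun i => emb (G' F (c.2.2 i))) ↔ Q c = true)} ∈ V := by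
    intro c
    rw [Ultrafilter.mem_map]
    refine Filter.mem_of_superset (hQreal c) ?_
    intro E hE
    show ((c.2.1).Realize (Sum.elim b fun i => emb (G' (κ E) (c.2.2 i))) ↔ Q c = true)
    have hGE : G' (κ E) = G E := by
      show G (pre (κ E)) = G E
      rw [hpre E]
    rw [hGE]
    exact hE
  -- the ultraproduct
  haveI hNE : Nonempty N := ⟨b ⟨0, hn⟩⟩
  let NP : Type w := (V : Filter (Finset CondW)).Product (fun _ => (N : Type w))
  let embq : M ↪ₑ[L] NP :=
    { toFun := fun x => (((fun F => emb (G' F x)) : ∀ _ : Finset CondW, N) : NP)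
      map_formula' := by
        intro k φ x
        have hcast := Ultraproduct.realize_formula_cast (u := V) φ
          (fun i F => emb (G' F (x i)))
        have hFf : ∀ F, ((φ.Realize fun i => emb (G' F (x i))) ↔ φ.Realize x) := fun F =>
          (emb.map_formula φ (fun i => G' F (x i))).trans
            (StrongHomClass.realize_formula (G' F) φ)
        exact hcast.trans
          ((Filter.eventually_congr (Filter.Eventually.of_forall hFf)).trans
            Filter.eventually_const) }
  let bq : Fin n → NP := fun j => (((fun _ => b j) : ∀ _ : Finset CondW, N) : NP)
  have hchar : ∀ (m : ℕ) (φ : L.Formula (Fin n ⊕ Fin m)) (mb : Fin m → M),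
      ((φ.Realize (Sum.elim bq fun j => embq (mb j)) : Prop) ↔ Q ⟨m, φ, mb⟩ = true) := by
    intro m φ mb
    have h0 : (Sum.elim bq fun j => embq (mb j)) = fun s =>
        ((Sum.elim (fun j (_ : Finset CondW) => b j) (fun i F => emb (G' F (mb i))) s :
          ∀ _ : Finset CondW, N) : NP) := by
      funext s
      cases s <;> rfl
    have hcast := Ultraproduct.realize_formula_cast (u := V) φ
      (Sum.elim (fun j (_ : Finset CondW) => b j) (fun i F => emb (G' F (mb i))))
    have h1 : ∀ F, ((φ.Realize fun s =>
        (Sum.elim (fun j (_ : Finset CondW) => b j) (fun i F => emb (G' F (mb i))) s) F) ↔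
        φ.Realize (Sum.elim b fun i => emb (G' F (mb i)))) := by
      intro F
      apply Iff.of_eq
      congr 1
      funext s
      cases s <;> rfl
    rw [h0]
    refine hcast.trans ?_
    refine (Filter.eventually_congr (Filter.Eventually.of_forall h1)).trans ?_
    constructor
    · intro hev
      obtain ⟨F, hF1, hF2⟩ :=
        Ultrafilter.nonempty_of_mem (Filter.inter_mem hev (hrealV ⟨m, φ, mb⟩))
      exact hF2.1 hF1
    · intro hQt
      refine Filter.mem_of_superset (hrealV ⟨m, φ, mb⟩) ?_
      intro F hF
      exact hF.2 hQt
  refine ⟨⟨NP, inferInstance⟩, embq, bq, ?_, ?_⟩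
  · intro g m φ mb
    have e1 := hchar m φ mb
    have e2 := hchar m φ (fun j => g (mb j))
    rw [hQinv m φ mb g] at e1
    exact e1.trans e2.symm
  · intro m φ mb hre
    have hQt : Q ⟨m, φ, mb⟩ = true := (hchar m φ mb).1 hre
    obtain ⟨F, hF⟩ := Ultrafilter.nonempty_of_mem (hrealV ⟨m, φ, mb⟩)
    exact ⟨G' F, hF.2 hQt⟩

end Forward2

/-- **Theorem 5.1(2).** An ultrahomogeneous structure `M` in a countable relational language
whose age is countable up to isomorphism has the externally definable Ramsey property iff it
has FPT. -/
theorem extDefRamsey_iff_fpt (L : FirstOrder.Language.{u, v}) [L.IsRelational]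
    [Countable L.Symbols] (M : Type w) [L.Structure M]
    (hM : L.IsUltrahomogeneous M)
    (hage : (Quotient.mk' '' L.age M).Countable) :
    ExtDefRamsey L M ↔ FPT L M :=
  ⟨fun h => extDefRamsey_to_fpt hM h, fun h => fpt_to_extDefRamsey hM h⟩

end EDRP
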